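/- Fix an integer d ≥ 1 and positive reals λ, θ, t. On a probability space let M be an ℕ-valued random variable with Poisson distribution of mean λt, let (T_i)_{i∈ℕ} be i.i.d. uniform on [0,t], and let U be uniform on [0,1], with M, (T_i), U jointly independent. Define S := { U ≤ exp( −θ Σ_{i<M} (t − T_i)^{d+1} ) }. Then for every m ∈ ℕ, P( S ∩ {M = m} ) = e^{−λ t} ( λ ∫_0^t e^{−θ r^{d+1}} dr )^m / m!. Consequently P( {M = m} | S ) = e^{−λ t φ(t)} ( λ t φ(t) )^m / m!, where t φ(t) := ∫_0^t e^{−θ r^{d+1}} dr; that is, conditioned on S, M is Poisson with mean λ t φ(t). -/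

import Mathlib

open MeasureTheory ProbabilityTheory

/-- Lemma 1 of the paper: with M Poisson of mean λt, (T_i) i.i.d. uniform on [0,t] and U
uniform on [0,1], all independent, and S = {U ≤ exp(−θ Σ_{i<M}(t−T_i)^{d+1})} (= {σ₂ > t}),
one has P(S ∩ {M = m}) = e^{−λt}(λ∫₀ᵗe^{−θ r^{d+1}}dr)^m/m!, so that conditioned on S,
M is Poisson with mean λ t φ(t) = λ ∫₀ᵗ e^{−θ r^{d+1}} dr. -/
theorem conditional_poisson_number_of_clones
    {Ω : Type*} [MeasureSpace Ω] [IsProbabilityMeasure (volume : Measure Ω)]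
    (d : ℕ) (hd : 1 ≤ d) (lam θ t : ℝ) (hlam : 0 < lam) (hθ : 0 < θ) (ht : 0 < t)
    (M : Ω → ℕ) (T : ℕ → Ω → ℝ) (U : Ω → ℝ)
    (hMmeas : Measurable M) (hTmeas : ∀ i, Measurable (T i)) (hUmeas : Measurable U)
    (hM : ∀ m : ℕ, volume {ω | M ω = m} =
      ENNReal.ofReal (Real.exp (-(lam * t)) * (lam * t) ^ m / m.factorial))
    (hT : ∀ i, Measure.map (T i) volume =
      (ENNReal.ofReal t)⁻¹ • volume.restrict (Set.Icc 0 t))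
    (hU : Measure.map U volume = volume.restrict (Set.Icc (0:ℝ) 1))
    (hTindep : iIndepFun T volume)
    (hMT : IndepFun M (fun ω => fun i => T i ω) volume)
    (hU_MT : IndepFun U (fun ω => (M ω, fun i => T i ω)) volume)
    (m : ℕ) :
    volume ({ω | U ω ≤
          Real.exp (-θ * ∑ i ∈ Finset.range (M ω), (t - T i ω) ^ (d + 1))} ∩
        {ω | M ω = m}) =
      ENNReal.ofReal (Real.exp (-(lam * t)) *
        (lam * ∫ r in (0:ℝ)..t, Real.exp (-θ * r ^ (d + 1))) ^ m / m.factorial) ∧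
    (volume : Measure Ω)[|{ω | U ω ≤
          Real.exp (-θ * ∑ i ∈ Finset.range (M ω), (t - T i ω) ^ (d + 1))}]
        {ω | M ω = m} =
      ENNReal.ofReal (Real.exp (-(lam * ∫ r in (0:ℝ)..t, Real.exp (-θ * r ^ (d + 1)))) *
        (lam * ∫ r in (0:ℝ)..t, Real.exp (-θ * r ^ (d + 1))) ^ m / m.factorial) := by
  classical
  set I : ℝ := ∫ r in (0:ℝ)..t, Real.exp (-θ * r ^ (d + 1)) with hIdef
  have hI_pos : 0 < I := by
    rw [hIdef]
    apply intervalIntegral.intervalIntegral_pos_of_pos_on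
    · exact (Real.continuous_exp.comp (by fun_prop)).intervalIntegrable 0 t
    · intro x _; exact Real.exp_pos _
    · exact ht
  set V : Ω → ℕ × (ℕ → ℝ) := fun ω => (M ω, fun i => T i ω) with hVdef
  have hVmeas : Measurable V := hMmeas.prodMk (measurable_pi_lambda _ hTmeas)
  set G : ℕ → (ℕ → ℝ) → ℝ :=
    fun k x => Real.exp (-θ * ∑ i ∈ Finset.range k, (t - x i) ^ (d + 1)) with hGdef
  have hG : ∀ k, Measurable (G k) := fun k =>
    Real.measurable_exp.comp ((Finset.measurable_sum _ (fun i _ =>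
      (measurable_const.sub (measurable_pi_apply i)).pow_const _)).const_mul _)
  set B : ℕ → Set (ℝ × (ℕ × (ℕ → ℝ))) :=
    fun k => {p | p.1 ≤ G k p.2.2 ∧ p.2.1 = k} with hBdef
  have hB : ∀ k, MeasurableSet (B k) := fun k =>
    (measurableSet_le measurable_fst ((hG k).comp (measurable_snd.comp measurable_snd))).inter
      ((measurable_fst.comp measurable_snd) (measurableSet_singleton k))
  set S : Set Ω := {ω | U ω ≤
      Real.exp (-θ * ∑ i ∈ Finset.range (M ω), (t - T i ω) ^ (d + 1))} with hSdef
  have hpre : ∀ k, S ∩ {ω | M ω = k} = (fun ω => (U ω, V ω)) ⁻¹' B k := by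
    intro k
    ext ω
    simp only [hSdef, hBdef, hVdef, Set.mem_inter_iff, Set.mem_setOf_eq, Set.mem_preimage]
    constructor
    · rintro ⟨h1, h2⟩
      subst h2
      exact ⟨h1, rfl⟩
    · rintro ⟨h1, h2⟩
      subst h2
      exact ⟨h1, rfl⟩
  have hmap : Measure.map (fun ω => (U ω, V ω)) volume
      = (Measure.map U volume).prod (Measure.map V volume) :=
    (indepFun_iff_map_prod_eq_prod_map_map hUmeas.aemeasurable hVmeas.aemeasurable).mp hU_MT
  haveI : IsProbabilityMeasure (Measure.map V volume) :=
    Measure.isProbabilityMeasure_map hVmeas.aemeasurable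
  -- a.e. all T i are in [0, t]
  have hgood : ∀ᵐ ω ∂(volume : Measure Ω), ∀ i, T i ω ∈ Set.Icc (0:ℝ) t := by
    rw [MeasureTheory.ae_all_iff]
    intro i
    have h1 : volume {ω | T i ω ∉ Set.Icc (0:ℝ) t}
        = Measure.map (T i) volume (Set.Icc (0:ℝ) t)ᶜ := by
      rw [Measure.map_apply (hTmeas i) measurableSet_Icc.compl]
      rfl
    have h0 : {ω | (fun ω => T i ω ∈ Set.Icc (0:ℝ) t) ω}ᶜ = {ω | T i ω ∉ Set.Icc (0:ℝ) t} := rfl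
    rw [Filter.eventually_iff]
    simp only [Filter.mem_sets, mem_ae_iff]
    rw [h0, h1, hT i]
    simp [Measure.restrict_apply measurableSet_Icc.compl]
  -- the elementary factors
  set X : ℕ → Ω → ENNReal :=
    fun i ω => ENNReal.ofReal (Real.exp (-θ * (t - T i ω) ^ (d + 1))) with hXdef
  have hXmeas : ∀ i, Measurable (X i) := by
    intro i
    exact (Real.measurable_exp.comp
      (((measurable_const.sub (hTmeas i)).pow_const _).const_mul _)).ennreal_ofReal
  have hXindep : iIndepFun X volume :=
    hTindep.comp (fun i s => ENNReal.ofReal (Real.exp (-θ * (t - s) ^ (d + 1))))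
      (fun i => (Real.measurable_exp.comp
        (((measurable_const.sub measurable_id).pow_const _).const_mul _)).ennreal_ofReal)
  have hXsingle : ∀ i, ∫⁻ ω, X i ω ∂volume = ENNReal.ofReal (I / t) := by
    intro i
    have hc : Continuous fun s : ℝ => Real.exp (-θ * (t - s) ^ (d + 1)) := by fun_prop
    have hg : Measurable fun s : ℝ => ENNReal.ofReal (Real.exp (-θ * (t - s) ^ (d + 1))) :=
      hc.measurable.ennreal_ofReal
    rw [hXdef]
    simp only
    rw [← lintegral_map hg (hTmeas i), hT i, lintegral_smul_measure,
      ← ofReal_integral_eq_lintegral_ofReal (hc.integrableOn_Icc)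
        (Filter.Eventually.of_forall fun x => (Real.exp_pos _).le)]
    have h1 : ∫ s in Set.Icc (0:ℝ) t, Real.exp (-θ * (t - s) ^ (d + 1)) = I := by
      rw [integral_Icc_eq_integral_Ioc, ← intervalIntegral.integral_of_le ht.le, hIdef]
      have := intervalIntegral.integral_comp_sub_left (a := 0) (b := t)
        (fun r => Real.exp (-θ * r ^ (d + 1))) t
      simpa using this
    rw [h1, ENNReal.ofReal_div_of_pos ht, div_eq_mul_inv, mul_comm, smul_eq_mul]
  -- product of the factors
  have hXprod : ∀ n : ℕ, ∫⁻ ω, ∏ i ∈ Finset.range n, X i ω ∂volume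
      = ENNReal.ofReal (I / t) ^ n := by
    intro n
    induction n with
    | zero => simp
    | succ n ih =>
      have hind : IndepFun (∏ j ∈ Finset.range n, X j) (X n) volume :=
        hXindep.indepFun_prod_range_succ hXmeas n
      have hmeasprod : Measurable (∏ j ∈ Finset.range n, X j) := by
        rw [Finset.prod_fn]
        exact Finset.measurable_prod _ (fun i _ => hXmeas i)
      calc ∫⁻ ω, ∏ i ∈ Finset.range (n+1), X i ω ∂volume
          = ∫⁻ ω, ((∏ j ∈ Finset.range n, X j) * X n) ω ∂volume := by
            apply lintegral_congr; intro ω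
            simp [Finset.prod_range_succ]
        _ = (∫⁻ ω, (∏ j ∈ Finset.range n, X j) ω ∂volume) * ∫⁻ ω, X n ω ∂volume :=
            lintegral_mul_eq_lintegral_mul_lintegral_of_indepFun hmeasprod (hXmeas n) hind
        _ = ENNReal.ofReal (I / t) ^ (n + 1) := by
            rw [show (∫⁻ ω, (∏ j ∈ Finset.range n, X j) ω ∂volume)
                = ∫⁻ ω, ∏ j ∈ Finset.range n, X j ω ∂volume from
              lintegral_congr fun ω => by simp, ih, hXsingle n, pow_succ]
  -- key computation
  have key : ∀ k : ℕ, volume (S ∩ {ω | M ω = k})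
      = ENNReal.ofReal (Real.exp (-(lam * t)) * (lam * I) ^ k / k.factorial) := by
    intro k
    rw [hpre k, ← Measure.map_apply (hUmeas.prodMk hVmeas) (hB k), hmap,
      Measure.prod_apply_symm (hB k), hU]
    have hsecmeas : Measurable fun v : ℕ × (ℕ → ℝ) =>
        (volume.restrict (Set.Icc (0:ℝ) 1)) ((fun u => (u, v)) ⁻¹' B k) :=
      measurable_measure_prodMk_right (hB k)
    rw [lintegral_map hsecmeas hVmeas]
    have hpt : ∀ᵐ ω ∂(volume : Measure Ω),
        (volume.restrict (Set.Icc (0:ℝ) 1)) ((fun u => (u, V ω)) ⁻¹' B k)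
          = (if M ω = k then (1:ENNReal) else 0) * ∏ i ∈ Finset.range k, X i ω := by
      filter_upwards [hgood] with ω hω
      by_cases hk : M ω = k
      · have hset : ((fun u => (u, V ω)) ⁻¹' B k) = Set.Iic (G k (fun i => T i ω)) := by
          ext u
          simp [hBdef, hVdef, hk]
        have hsum_nonneg : 0 ≤ ∑ i ∈ Finset.range k, (t - T i ω) ^ (d + 1) :=
          Finset.sum_nonneg fun i _ => pow_nonneg (sub_nonneg.mpr (hω i).2) _
        have hc1 : G k (fun i => T i ω) ≤ 1 := by
          rw [hGdef]
          exact Real.exp_le_one_iff.mpr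
            (mul_nonpos_of_nonpos_of_nonneg (neg_nonpos.mpr hθ.le) hsum_nonneg)
        have hc0 : (0:ℝ) < G k (fun i => T i ω) := Real.exp_pos _
        have hIic : Set.Iic (G k (fun i => T i ω)) ∩ Set.Icc (0:ℝ) 1
            = Set.Icc 0 (G k (fun i => T i ω)) := by
          ext u
          constructor
          · rintro ⟨h1, h2, _⟩; exact ⟨h2, h1⟩
          · rintro ⟨h1, h2⟩; exact ⟨h2, h1, h2.trans hc1⟩
        rw [hset, Measure.restrict_apply measurableSet_Iic, hIic, Real.volume_Icc, sub_zero,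
          hk, if_pos rfl, one_mul, hGdef]
        beta_reduce
        rw [show (-θ * ∑ i ∈ Finset.range k, (t - T i ω) ^ (d + 1))
            = ∑ i ∈ Finset.range k, (-θ * (t - T i ω) ^ (d + 1)) by rw [Finset.mul_sum],
          Real.exp_sum, ENNReal.ofReal_prod_of_nonneg (fun i _ => (Real.exp_pos _).le)]
      · have hset : ((fun u => (u, V ω)) ⁻¹' B k) = ∅ := by
          ext u
          simp [hBdef, hVdef, hk]
        rw [hset, if_neg hk, zero_mul, measure_empty]
    rw [lintegral_congr_ae hpt]
    have hind : IndepFun (fun ω => (if M ω = k then (1:ENNReal) else 0))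
        (fun ω => ∏ i ∈ Finset.range k, X i ω) volume := by
      have h1 : (fun ω => (if M ω = k then (1:ENNReal) else 0))
          = (fun n : ℕ => if n = k then (1:ENNReal) else 0) ∘ M := rfl
      have h2 : (fun ω => ∏ i ∈ Finset.range k, X i ω)
          = (fun x : ℕ → ℝ => ∏ i ∈ Finset.range k,
              ENNReal.ofReal (Real.exp (-θ * (t - x i) ^ (d + 1)))) ∘ (fun ω i => T i ω) := rfl
      rw [h1, h2]
      exact hMT.comp (measurable_of_countable _)
        (Finset.measurable_prod _ (fun i _ =>
          (Real.measurable_exp.comp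
            (((measurable_const.sub (measurable_pi_apply i)).pow_const _).const_mul _)).ennreal_ofReal))
    have hmeas1 : Measurable (fun ω => (if M ω = k then (1:ENNReal) else 0)) :=
      (measurable_of_countable (fun n : ℕ => if n = k then (1:ENNReal) else 0)).comp hMmeas
    have hmeas2 : Measurable (fun ω => ∏ i ∈ Finset.range k, X i ω) :=
      Finset.measurable_prod _ (fun i _ => hXmeas i)
    have hmul := lintegral_mul_eq_lintegral_mul_lintegral_of_indepFun hmeas1 hmeas2 hind
    simp only [Pi.mul_apply] at hmul
    rw [hmul]
    have hind_int : ∫⁻ ω, (if M ω = k then (1:ENNReal) else 0) ∂volume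
        = volume {ω | M ω = k} := by
      rw [← lintegral_indicator_one (s := {ω | M ω = k}) (hMmeas (measurableSet_singleton k))]
      apply lintegral_congr
      intro ω
      by_cases h : M ω = k <;> simp [Set.indicator_apply, Set.mem_preimage, h]
    rw [hind_int, hXprod k, hM k,
      ← ENNReal.ofReal_pow (by positivity), ← ENNReal.ofReal_mul (by positivity)]
    congr 1
    have htne : t ≠ 0 := ht.ne'
    field_simp
    rw [← mul_pow]
    congr 1
    rw [mul_assoc, mul_div_assoc', mul_comm t I, mul_div_assoc, div_self htne, mul_one]
  -- total probability of S
  have hSunion : S = ⋃ k : ℕ, S ∩ {ω | M ω = k} := by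
    ext ω
    simp only [Set.mem_iUnion, Set.mem_inter_iff, Set.mem_setOf_eq]
    exact ⟨fun h => ⟨M ω, h, rfl⟩, fun ⟨k, h, _⟩ => h⟩
  have hSmeas : MeasurableSet S := by
    rw [hSunion]
    exact MeasurableSet.iUnion fun k => (hpre k) ▸ ((hUmeas.prodMk hVmeas) (hB k))
  have hsummable : Summable (fun k : ℕ => Real.exp (-(lam * t)) * (lam * I) ^ k / k.factorial) := by
    simp_rw [mul_div_assoc]
    exact (Real.summable_pow_div_factorial (lam * I)).mul_left _
  have hStot : volume S = ENNReal.ofReal (Real.exp (lam * I - lam * t)) := by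
    conv_lhs => rw [hSunion]
    rw [measure_iUnion ?_ (fun k =>
      (hSmeas.inter (hMmeas (measurableSet_singleton k)) :
        MeasurableSet (S ∩ {ω | M ω = k})))]
    · simp_rw [key]
      rw [← ENNReal.ofReal_tsum_of_nonneg (fun k => by positivity) hsummable]
      congr 1
      simp_rw [mul_div_assoc]
      rw [tsum_mul_left]
      have hexp : ∑' k : ℕ, (lam * I) ^ k / (k.factorial : ℝ) = Real.exp (lam * I) := by
        rw [Real.exp_eq_exp_ℝ, NormedSpace.exp_eq_tsum_div]
      rw [hexp, ← Real.exp_add]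
      congr 1
      ring
    · intro i j hij
      simp only [Function.onFun, Set.disjoint_left]
      rintro ω ⟨-, hi⟩ ⟨-, hj⟩
      exact hij (hi ▸ hj ▸ rfl)
  refine ⟨key m, ?_⟩
  rw [cond_apply hSmeas, key m, hStot,
    ← ENNReal.ofReal_inv_of_pos (Real.exp_pos _),
    ← ENNReal.ofReal_mul (by positivity)]
  congr 1
  rw [← Real.exp_neg, ← mul_div_assoc, ← mul_assoc, ← Real.exp_add]
  congr 2
  ring
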